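/- Let G be a finite simple graph with m edges and n vertices, and F a field. Suppose N is an m × (3m+n) matrix over F such that: the row space of N equals the row space of M(G); every row of N has at most 5 nonzero entries; and every linear combination of k ≥ 2 rows of N in which all k coefficients are nonzero has at least 6 nonzero entries. Then there exist a permutation π of {1,…,m} and nonzero scalars c_1,…,c_m ∈ F such that row i of N equals c_i · (row π(i) of M(G)) for every i. In other words, up to permutation and scaling of its rows, M(G) is the unique generator matrix of its code satisfying these properties. -/

import Mathlib

/-- Row `e` of the generator matrix `M(G) = [I_m | I_m | I_m | D]` of Petrank–Roth type,
as a vector indexed by three copies of the edge set followed by the vertex set.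
`D` is the edge-vertex incidence matrix of `G`. -/
def MGrow (F : Type*) [Field F] {V : Type*} [DecidableEq V] (G : SimpleGraph V)
    (e : G.edgeSet) : (G.edgeSet ⊕ G.edgeSet ⊕ G.edgeSet ⊕ V) → F :=
  Sum.elim (fun e' => if e' = e then 1 else 0)
    (Sum.elim (fun e' => if e' = e then 1 else 0)
      (Sum.elim (fun e' => if e' = e then 1 else 0)
        (fun v => if v ∈ (e : Sym2 V) then 1 else 0)))

/-- Up to permutation and scaling of its rows, `M(G)` is the unique
generator matrix of its code all of whose rows have Hamming weight at most `5` and all of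
whose nondegenerate linear combinations of at least two rows have Hamming weight at
least `6`.  Here a generator matrix is an `m × (3m+n)` matrix (rows indexed by the edges)
whose row space equals that of `M(G)`. -/
theorem stmt_7 (F : Type*) [Field F] {V : Type*} [Fintype V] [DecidableEq V]
    (G : SimpleGraph V) [DecidableRel G.Adj]
    (N : G.edgeSet → (G.edgeSet ⊕ G.edgeSet ⊕ G.edgeSet ⊕ V) → F)
    (hspan : Submodule.span F (Set.range N) = Submodule.span F (Set.range (MGrow F G)))
    (hrows : ∀ e, {j | N e j ≠ 0}.ncard ≤ 5)
    (hcomb : ∀ c : G.edgeSet → F, 2 ≤ {e | c e ≠ 0}.ncard →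
      6 ≤ {j | (∑ e : G.edgeSet, c e • N e) j ≠ 0}.ncard) :
    ∃ (π : Equiv.Perm G.edgeSet) (c : G.edgeSet → F),
      (∀ e, c e ≠ 0) ∧ ∀ e, N e = c e • MGrow F G (π e) := by
  classical
  -- each row of M(G) has weight ≤ 5
  have hwt : ∀ f : G.edgeSet, {j | MGrow F G f j ≠ 0}.ncard ≤ 5 := by
    intro f
    obtain ⟨⟨a, b⟩, hab⟩ := Quot.exists_rep (f : Sym2 V)
    have hmem : ∀ v : V, v ∈ (f : Sym2 V) ↔ v = a ∨ v = b := by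
      intro v
      rw [← hab]
      exact Sym2.mem_iff
    have hsub : {j | MGrow F G f j ≠ 0} ⊆
        ({Sum.inl f, Sum.inr (Sum.inl f), Sum.inr (Sum.inr (Sum.inl f)),
          Sum.inr (Sum.inr (Sum.inr a)), Sum.inr (Sum.inr (Sum.inr b))} :
          Set (G.edgeSet ⊕ G.edgeSet ⊕ G.edgeSet ⊕ V)) := by
      rintro (e | e | e | v) hj <;>
        simp only [MGrow, Set.mem_setOf_eq, Sum.elim_inl, Sum.elim_inr,
          ne_eq, ite_eq_right_iff, not_forall] at hj <;>
        simp_all [hmem]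
    refine le_trans (Set.ncard_le_ncard hsub (Set.toFinite _)) ?_
    have l4 := Set.ncard_insert_le (Sum.inr (Sum.inr (Sum.inr a)) :
      G.edgeSet ⊕ G.edgeSet ⊕ G.edgeSet ⊕ V) {Sum.inr (Sum.inr (Sum.inr b))}
    have l3 := Set.ncard_insert_le (Sum.inr (Sum.inr (Sum.inl f)) :
      G.edgeSet ⊕ G.edgeSet ⊕ G.edgeSet ⊕ V)
      {Sum.inr (Sum.inr (Sum.inr a)), Sum.inr (Sum.inr (Sum.inr b))}
    have l2 := Set.ncard_insert_le (Sum.inr (Sum.inl f) :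
      G.edgeSet ⊕ G.edgeSet ⊕ G.edgeSet ⊕ V)
      {Sum.inr (Sum.inr (Sum.inl f)), Sum.inr (Sum.inr (Sum.inr a)),
        Sum.inr (Sum.inr (Sum.inr b))}
    have l1 := Set.ncard_insert_le (Sum.inl f :
      G.edgeSet ⊕ G.edgeSet ⊕ G.edgeSet ⊕ V)
      {Sum.inr (Sum.inl f), Sum.inr (Sum.inr (Sum.inl f)),
        Sum.inr (Sum.inr (Sum.inr a)), Sum.inr (Sum.inr (Sum.inr b))}
    have l5 : ({Sum.inr (Sum.inr (Sum.inr b))} :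
        Set (G.edgeSet ⊕ G.edgeSet ⊕ G.edgeSet ⊕ V)).ncard = 1 :=
      Set.ncard_singleton _
    omega
  -- each row of M(G) is a nonzero multiple of a single row of N
  have key : ∀ f : G.edgeSet, ∃ e, ∃ d : F, d ≠ 0 ∧ MGrow F G f = d • N e := by
    intro f
    have hmemspan : MGrow F G f ∈ Submodule.span F (Set.range N) := by
      rw [hspan]
      exact Submodule.subset_span (Set.mem_range_self f)
    obtain ⟨c, hc⟩ := (Submodule.mem_span_range_iff_exists_fun F).mp hmemspan
    have hone : {e | c e ≠ 0}.ncard ≤ 1 := by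
      by_contra h
      have := hcomb c (by omega)
      have heq : {j | (∑ e : G.edgeSet, c e • N e) j ≠ 0} =
          {j | MGrow F G f j ≠ 0} := by
        have : (∑ e : G.edgeSet, c e • N e) = MGrow F G f := by
          funext j; exact congrFun hc j
        rw [this]
      rw [heq] at this
      have := hwt f
      omega
    have hne : ∃ e, c e ≠ 0 := by
      by_contra h
      push_neg at h
      have : (0 : (G.edgeSet ⊕ G.edgeSet ⊕ G.edgeSet ⊕ V) → F) = MGrow F G f := by
        rw [← hc]
        funext j
        simp [h]
      have h1 := congrFun this (Sum.inl f)
      simp [MGrow] at h1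
    obtain ⟨e0, he0⟩ := hne
    refine ⟨e0, c e0, he0, ?_⟩
    rw [← hc]
    have : ∑ e : G.edgeSet, c e • N e = c e0 • N e0 := by
      refine Finset.sum_eq_single e0 (fun e _ hee => ?_) (by simp)
      have : c e = 0 := by
        by_contra hce
        exact hee ((Set.ncard_le_one (Set.toFinite _)).mp hone _ hce _ he0)
      simp [this]
    rw [this]
  choose σ d hd hNd using key
  have hinj : Function.Injective σ := by
    intro f1 f2 h12
    by_contra hne
    have h1 := congrFun (hNd f1) (Sum.inl f1)
    have h2 := congrFun (hNd f2) (Sum.inl f1)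
    rw [h12] at h1
    simp only [MGrow, Sum.elim_inl, if_pos rfl, Pi.smul_apply, smul_eq_mul] at h1
    simp only [MGrow, Sum.elim_inl, Pi.smul_apply, smul_eq_mul,
      if_neg (fun h => hne (Subtype.ext (Subtype.ext_iff.mp h)))] at h2
    -- h1 : 1 = d f1 * N (σ f2) (inl f1), h2 : 0 = d f2 * N (σ f2) (inl f1)
    have hN : N (σ f2) (Sum.inl f1) ≠ 0 := by
      intro h0
      rw [h0, mul_zero] at h1
      exact one_ne_zero h1
    exact hN (by
      have := mul_eq_zero.mp h2.symm
      tauto)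
  have hbij : Function.Bijective σ := Finite.injective_iff_bijective.mp hinj
  set τ := Equiv.ofBijective σ hbij with hτ
  refine ⟨τ.symm, fun e => (d (τ.symm e))⁻¹, fun e => inv_ne_zero (hd _), fun e => ?_⟩
  have h1 : MGrow F G (τ.symm e) = d (τ.symm e) • N e := by
    have := hNd (τ.symm e)
    have hσ : σ (τ.symm e) = e := τ.apply_symm_apply e
    rwa [hσ] at this
  rw [h1, smul_smul, inv_mul_cancel₀ (hd _), one_smul]
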